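/- The function F(p) := (1 − p + p·ln p)/(p·(ln p)²) for p ∈ (0,1), with F(0) := ∞ and F(1) := 1/2, satisfies F(p) = ∫₀¹ κ p^(κ−1) dκ for p ∈ (0,1), and is a calibrator: E[F(P)] ≤ 1 for every p-variable P. -/

import Mathlib

open MeasureTheory
open scoped ENNReal NNReal

private lemma calib_repr (p : ℝ) (hp : p ∈ Set.Ioo (0:ℝ) 1) :
    ∫⁻ κ in Set.Ioo (0:ℝ) 1, ENNReal.ofReal (κ * p ^ (κ - 1))
      = ENNReal.ofReal ((1 - p + p * Real.log p) / (p * (Real.log p) ^ 2)) := by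
  obtain ⟨hp0, hp1⟩ := hp
  set a := Real.log p with ha_def
  have ha : a < 0 := Real.log_neg hp0 hp1
  have ha' : a ≠ 0 := ha.ne
  have hrw : ∀ κ : ℝ, p ^ (κ - 1) = Real.exp ((κ - 1) * a) := fun κ => by
    rw [Real.rpow_def_of_pos hp0, mul_comm]
  have hgc : Continuous fun κ : ℝ => κ * Real.exp ((κ - 1) * a) := by continuity
  have hint : IntegrableOn (fun κ : ℝ => κ * Real.exp ((κ - 1) * a)) (Set.Ioo 0 1) :=
    (hgc.integrableOn_Icc (a := 0) (b := 1)).mono_set Set.Ioo_subset_Icc_self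
  have h1 : ∫⁻ κ in Set.Ioo (0:ℝ) 1, ENNReal.ofReal (κ * p ^ (κ - 1))
      = ENNReal.ofReal (∫ κ in Set.Ioo (0:ℝ) 1, κ * Real.exp ((κ - 1) * a)) := by
    rw [ofReal_integral_eq_lintegral_ofReal hint ?_]
    · exact lintegral_congr fun κ => by rw [hrw]
    · filter_upwards [ae_restrict_mem measurableSet_Ioo] with κ hκ
      exact mul_nonneg hκ.1.le (Real.exp_pos _).le
  rw [h1]
  congr 1
  have hIoo : ∫ κ in Set.Ioo (0:ℝ) 1, κ * Real.exp ((κ - 1) * a)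
      = ∫ κ in (0:ℝ)..1, κ * Real.exp ((κ - 1) * a) := by
    rw [intervalIntegral.integral_of_le zero_le_one, ← integral_Ioc_eq_integral_Ioo]
  rw [hIoo]
  have hFTC : ∫ κ in (0:ℝ)..1, κ * Real.exp ((κ - 1) * a)
      = (Real.exp ((1 - 1) * a) * (1 / a - 1 / a ^ 2))
        - (Real.exp ((0 - 1) * a) * (0 / a - 1 / a ^ 2)) := by
    apply intervalIntegral.integral_eq_sub_of_hasDerivAt
      (f := fun κ : ℝ => Real.exp ((κ - 1) * a) * (κ / a - 1 / a ^ 2))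
    · intro x hx
      have h1 : HasDerivAt (fun κ : ℝ => (κ - 1) * a) (1 * a) x :=
        ((hasDerivAt_id x).sub_const 1).mul_const a
      have h2 := h1.exp
      have h3 : HasDerivAt (fun κ : ℝ => κ / a - 1 / a ^ 2) (1 / a) x :=
        ((hasDerivAt_id x).div_const a).sub_const (1 / a ^ 2)
      have h4 := h2.mul h3
      convert h4 using 1
      · rfl
      · rfl
      · field_simp
        ring
    · exact (hgc.intervalIntegrable 0 1)
  rw [hFTC]
  have hexp : Real.exp ((0 - 1) * a) = 1 / p := by
    rw [show ((0:ℝ) - 1) * a = -a by ring, Real.exp_neg, ha_def, Real.exp_log hp0]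
    rw [one_div]
  rw [hexp]
  simp only [sub_self, zero_mul, Real.exp_zero, one_mul, zero_div, zero_sub]
  field_simp
  ring

private lemma calib_repr_one :
    ∫⁻ κ in Set.Ioo (0:ℝ) 1, ENNReal.ofReal (κ * (1:ℝ) ^ (κ - 1))
      = ENNReal.ofReal (1 / 2) := by
  have h : ∀ κ : ℝ, κ * (1:ℝ) ^ (κ - 1) = κ := fun κ => by
    rw [Real.one_rpow, mul_one]
  simp only [h]
  rw [← ofReal_integral_eq_lintegral_ofReal]
  · congr 1
    rw [← integral_Ioc_eq_integral_Ioo, ← intervalIntegral.integral_of_le zero_le_one]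
    simpa using integral_id (a := (0:ℝ)) (b := 1)
  · exact (continuous_id.integrableOn_Icc (a := 0) (b := 1)).mono_set Set.Ioo_subset_Icc_self
  · filter_upwards [ae_restrict_mem measurableSet_Ioo] with κ hκ using hκ.1.le

private lemma calib_joint_meas {Ω : Type} [MeasurableSpace Ω] (P : Ω → ℝ)
    (hP : Measurable P) (hPr : ∀ ω, 0 ≤ P ω) :
    Measurable (fun z : Ω × ℝ => P z.1 ^ (z.2 - 1)) := by
  have heq : (fun z : Ω × ℝ => P z.1 ^ (z.2 - 1))
      = fun z : Ω × ℝ => if P z.1 = 0 then (if z.2 - 1 = 0 then 1 else 0)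
          else Real.exp (Real.log (P z.1) * (z.2 - 1)) :=
    funext fun z => Real.rpow_def_of_nonneg (hPr z.1) _
  rw [heq]
  apply Measurable.ite (measurableSet_eq_fun (hP.comp measurable_fst) measurable_const)
  · exact Measurable.ite (measurableSet_eq_fun (measurable_snd.sub measurable_const)
      measurable_const) measurable_const measurable_const
  · exact Real.measurable_exp.comp ((Real.measurable_log.comp (hP.comp measurable_fst)).mul
      (measurable_snd.sub measurable_const))

private lemma calib_tail {Ω : Type} [MeasurableSpace Ω] (Q : Measure Ω)
    [IsProbabilityMeasure Q]
    (P : Ω → ℝ) (hP : Measurable P) (hPr : ∀ ω, P ω ∈ Set.Icc (0:ℝ) 1)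
    (hpv : ∀ ε ∈ Set.Ioo (0:ℝ) 1, Q {ω | P ω ≤ ε} ≤ ENNReal.ofReal ε)
    (κ : ℝ) (hκ : κ ∈ Set.Ioo (0:ℝ) 1) :
    ∫⁻ ω, ENNReal.ofReal (P ω ^ (κ - 1)) ∂Q ≤ ENNReal.ofReal (1 / κ) := by
  obtain ⟨hκ0, hκ1⟩ := hκ
  have hκm : κ - 1 < 0 := by linarith
  obtain ⟨c, hc_def⟩ : ∃ c : ℝ, c = 1 / (κ - 1) := ⟨_, rfl⟩
  have hc : c < -1 := by
    rw [hc_def, div_lt_iff_of_neg (by linarith : κ - 1 < 0)]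
    linarith
  have hcneg : c < 0 := by linarith
  have hlc : ∫⁻ ω, ENNReal.ofReal (P ω ^ (κ - 1)) ∂Q
      = ∫⁻ t in Set.Ioi (0:ℝ), Q {ω | t < P ω ^ (κ - 1)} :=
    lintegral_eq_lintegral_meas_lt Q
      (Filter.Eventually.of_forall fun ω => Real.rpow_nonneg (hPr ω).1 _)
      (by measurability : Measurable fun ω => P ω ^ (κ - 1)).aemeasurable
  rw [hlc]
  have hsplit : Set.Ioi (0:ℝ) = Set.Ioc 0 1 ∪ Set.Ioi 1 :=
    (Set.Ioc_union_Ioi_eq_Ioi zero_le_one).symm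
  rw [hsplit, lintegral_union measurableSet_Ioi (Set.Ioc_disjoint_Ioi le_rfl)]
  have h1 : ∫⁻ t in Set.Ioc (0:ℝ) 1, Q {ω | t < P ω ^ (κ - 1)} ≤ 1 := by
    calc ∫⁻ t in Set.Ioc (0:ℝ) 1, Q {ω | t < P ω ^ (κ - 1)}
        ≤ ∫⁻ _ in Set.Ioc (0:ℝ) 1, 1 := lintegral_mono fun t => prob_le_one
      _ = 1 := by simp [Real.volume_Ioc]
  have h2 : ∫⁻ t in Set.Ioi (1:ℝ), Q {ω | t < P ω ^ (κ - 1)}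
      ≤ ∫⁻ t in Set.Ioi (1:ℝ), ENNReal.ofReal (t ^ c) := by
    apply setLIntegral_mono' measurableSet_Ioi
    intro t ht
    have ht1 : (1:ℝ) < t := ht
    have hs0 : 0 < t ^ c := Real.rpow_pos_of_pos (by linarith) c
    have hs1 : t ^ c < 1 := Real.rpow_lt_one_of_one_lt_of_neg ht1 hcneg
    have hsub : {ω | t < P ω ^ (κ - 1)} ⊆ {ω | P ω ≤ t ^ c} := by
      intro ω hω
      simp only [Set.mem_setOf_eq] at hω ⊢
      rcases eq_or_lt_of_le (hPr ω).1 with h0 | h0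
      · exfalso
        rw [← h0, Real.zero_rpow hκm.ne] at hω
        linarith
      · have hlt : (P ω ^ (κ - 1)) ^ c < t ^ c :=
          Real.rpow_lt_rpow_of_neg (by linarith) hω hcneg
        have hPeq : (P ω ^ (κ - 1)) ^ c = P ω := by
          rw [← Real.rpow_mul h0.le, hc_def, mul_one_div, div_self hκm.ne, Real.rpow_one]
        rw [hPeq] at hlt
        exact hlt.le
    exact (measure_mono hsub).trans (hpv _ ⟨hs0, hs1⟩)
  have h3 : ∫⁻ t in Set.Ioi (1:ℝ), ENNReal.ofReal (t ^ c) = ENNReal.ofReal ((1 - κ) / κ) := by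
    rw [← ofReal_integral_eq_lintegral_ofReal (integrableOn_Ioi_rpow_of_lt hc one_pos)
      (by filter_upwards [ae_restrict_mem measurableSet_Ioi] with t ht
          exact Real.rpow_nonneg (by linarith [Set.mem_Ioi.mp ht] : (0:ℝ) ≤ t) c)]
    rw [integral_Ioi_rpow_of_lt hc one_pos, Real.one_rpow]
    congr 1
    have h4 : c + 1 = κ / (κ - 1) := by rw [hc_def, div_add' _ _ _ hκm.ne]; ring_nf
    rw [h4, div_div_eq_mul_div]
    rw [div_eq_div_iff hκ0.ne' hκ0.ne']
    ring
  calc _ ≤ 1 + ENNReal.ofReal ((1 - κ) / κ) := add_le_add h1 (h2.trans h3.le)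
    _ = ENNReal.ofReal (1 + (1 - κ) / κ) := by
        rw [ENNReal.ofReal_add zero_le_one (div_nonneg (by linarith) hκ0.le)]; simp
    _ = ENNReal.ofReal (1 / κ) := by congr 1; field_simp; ring

theorem mixture_calibrator
    (F : ℝ → ℝ≥0∞)
    (hF0 : F 0 = ∞) (hF1 : F 1 = ENNReal.ofReal (1/2))
    (hFmid : ∀ p ∈ Set.Ioo (0:ℝ) 1,
      F p = ENNReal.ofReal ((1 - p + p * Real.log p) / (p * (Real.log p) ^ 2))) :
    (∀ p ∈ Set.Ioo (0:ℝ) 1,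
      F p = ∫⁻ κ in Set.Ioo (0:ℝ) 1, ENNReal.ofReal (κ * p ^ (κ - 1))) ∧
    (∀ (Ω : Type) [MeasurableSpace Ω] (Q : Measure Ω), IsProbabilityMeasure Q →
      ∀ P : Ω → ℝ, Measurable P → (∀ ω, P ω ∈ Set.Icc (0:ℝ) 1) →
        (∀ ε ∈ Set.Ioo (0:ℝ) 1, Q {ω | P ω ≤ ε} ≤ ENNReal.ofReal ε) →
        ∫⁻ ω, F (P ω) ∂Q ≤ 1) := by
  constructor
  · intro p hp
    rw [hFmid p hp, calib_repr p hp]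
  · intro Ω _ Q hQ P hP hPr hpv
    -- the set {P = 0} is null
    have hnull : Q {ω | P ω = 0} = 0 := by
      refine le_antisymm ?_ zero_le
      refine ENNReal.le_of_forall_pos_le_add fun ε hε _ => ?_
      rw [zero_add]
      set δ : ℝ := min (ε : ℝ) (1/2) with hδ_def
      have hδ : δ ∈ Set.Ioo (0:ℝ) 1 :=
        ⟨lt_min (by exact_mod_cast hε) (by norm_num), lt_of_le_of_lt (min_le_right _ _) (by norm_num)⟩
      calc Q {ω | P ω = 0} ≤ Q {ω | P ω ≤ δ} :=
            measure_mono fun ω (h : P ω = 0) => h.le.trans hδ.1.le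
        _ ≤ ENNReal.ofReal δ := hpv δ hδ
        _ ≤ (ε : ℝ≥0∞) := by
            rw [← ENNReal.ofReal_coe_nnreal]
            exact ENNReal.ofReal_le_ofReal (min_le_left _ _)
    have hne : ∀ᵐ ω ∂Q, P ω ≠ 0 := by
      rw [ae_iff]
      simp only [not_not]
      exact hnull
    have hae : ∀ᵐ ω ∂Q, F (P ω)
        = ∫⁻ κ in Set.Ioo (0:ℝ) 1, ENNReal.ofReal (κ * P ω ^ (κ - 1)) := by
      filter_upwards [hne] with ω hω
      have h0 : 0 < P ω := lt_of_le_of_ne (hPr ω).1 (Ne.symm hω)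
      rcases eq_or_lt_of_le (hPr ω).2 with h1 | h1
      · rw [h1, hF1, calib_repr_one]
      · rw [hFmid _ ⟨h0, h1⟩, calib_repr _ ⟨h0, h1⟩]
    rw [lintegral_congr_ae hae]
    have hmeas : AEMeasurable (Function.uncurry fun (ω : Ω) (κ : ℝ) =>
        ENNReal.ofReal (κ * P ω ^ (κ - 1)))
        (Q.prod ((volume : Measure ℝ).restrict (Set.Ioo 0 1))) := by
      apply Measurable.aemeasurable
      exact ENNReal.measurable_ofReal.comp
        (measurable_snd.mul (calib_joint_meas P hP (fun ω => (hPr ω).1)))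
    rw [lintegral_lintegral_swap hmeas]
    have hbound : ∀ κ ∈ Set.Ioo (0:ℝ) 1,
        ∫⁻ ω, ENNReal.ofReal (κ * P ω ^ (κ - 1)) ∂Q ≤ 1 := by
      intro κ hκ
      have hmono : ∀ ω, ENNReal.ofReal (κ * P ω ^ (κ - 1))
          = ENNReal.ofReal κ * ENNReal.ofReal (P ω ^ (κ - 1)) := fun ω =>
        ENNReal.ofReal_mul hκ.1.le
      simp only [hmono]
      rw [lintegral_const_mul _ (by
        exact ENNReal.measurable_ofReal.comp (by measurability))]
      calc ENNReal.ofReal κ * ∫⁻ ω, ENNReal.ofReal (P ω ^ (κ - 1)) ∂Q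
          ≤ ENNReal.ofReal κ * ENNReal.ofReal (1 / κ) :=
            by gcongr; exact calib_tail Q P hP hPr hpv κ hκ
        _ = ENNReal.ofReal (κ * (1 / κ)) := (ENNReal.ofReal_mul hκ.1.le).symm
        _ = 1 := by rw [mul_one_div, div_self hκ.1.ne', ENNReal.ofReal_one]
    calc ∫⁻ κ in Set.Ioo (0:ℝ) 1, ∫⁻ ω, ENNReal.ofReal (κ * P ω ^ (κ - 1)) ∂Q
        ≤ ∫⁻ _ in Set.Ioo (0:ℝ) 1, 1 := setLIntegral_mono' measurableSet_Ioo hbound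
      _ = 1 := by simp [Real.volume_Ioo]
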